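/- In the ring R = (ℤ/2ℤ)[x]/(x³ + x⁴), every element u satisfies u³ + u⁴ + u⁵ + u⁶ = 0. Consequently, for the subring R' generated by 1, one has s(R'; R) ≤ 6 (and hence, combined with the lower bound, s(R'; R) = 6 > 4 ≥ s(R)). -/

import Mathlib

open Polynomial in
theorem aux_key : ∀ u : Polynomial (ZMod 2) ⧸
          Ideal.span {(X : Polynomial (ZMod 2)) ^ 3 + X ^ 4},
        u ^ 3 + u ^ 4 + u ^ 5 + u ^ 6 = 0 := by
  intro u
  obtain ⟨f, rfl⟩ := Ideal.Quotient.mk_surjective u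
  have h2 : (2 : Polynomial (ZMod 2)) = 0 := by
    exact_mod_cast CharP.cast_eq_zero (Polynomial (ZMod 2)) 2
  rw [← map_pow, ← map_pow, ← map_pow, ← map_pow, ← map_add, ← map_add, ← map_add,
    Ideal.Quotient.eq_zero_iff_mem, Ideal.mem_span_singleton]
  have key : f ^ 3 + f ^ 4 + f ^ 5 + f ^ 6 = (f + f ^ 2) ^ 3 := by
    linear_combination (-(f ^ 4) - f ^ 5) * h2
  rw [key]
  have hx : X ∣ f + f ^ 2 := by
    rw [Polynomial.X_dvd_iff, Polynomial.coeff_zero_eq_eval_zero]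
    simp only [eval_add, eval_pow]
    have : ∀ t : ZMod 2, t + t ^ 2 = 0 := by decide
    exact this _
  have hx1 : (X + 1 : Polynomial (ZMod 2)) ∣ f + f ^ 2 := by
    have : (X + 1 : Polynomial (ZMod 2)) = X - C 1 := by
      rw [map_one]
      linear_combination h2
    rw [this, Polynomial.dvd_iff_isRoot]
    simp only [IsRoot.def, eval_add, eval_pow]
    have : ∀ t : ZMod 2, t + t ^ 2 = 0 := by decide
    exact this _
  have hcop : IsCoprime (X : Polynomial (ZMod 2)) (X + 1) := by
    refine ⟨1, 1, ?_⟩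
    linear_combination X * h2
  have hmul : (X * (X + 1) : Polynomial (ZMod 2)) ∣ f + f ^ 2 := hcop.mul_dvd hx hx1
  have h3 : ((X * (X + 1)) ^ 3 : Polynomial (ZMod 2)) ∣ (f + f ^ 2) ^ 3 :=
    pow_dvd_pow_of_dvd hmul 3
  refine dvd_trans ?_ h3
  refine ⟨(X + 1) ^ 2, by ring⟩

open Polynomial in
/-- In `R = (ℤ/2ℤ)[x]/(x³ + x⁴)`, every element `u` satisfies
`u³ + u⁴ + u⁵ + u⁶ = 0`. Consequently, for the subring `R'` generated by `1`,
one has `s(R'; R) ≤ 6`. -/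
theorem stmt_13 :
    (∀ u : Polynomial (ZMod 2) ⧸
          Ideal.span {(X : Polynomial (ZMod 2)) ^ 3 + X ^ 4},
        u ^ 3 + u ^ 4 + u ^ 5 + u ^ 6 = 0) ∧
    sInf {m : ℕ | ∃ p : Polynomial (Polynomial (ZMod 2) ⧸
          Ideal.span {(X : Polynomial (ZMod 2)) ^ 3 + X ^ 4}),
        (∀ i, p.coeff i ∈ (⊥ : Subring (Polynomial (ZMod 2) ⧸
            Ideal.span {(X : Polynomial (ZMod 2)) ^ 3 + X ^ 4}))) ∧
        p.degree < (m : WithBot ℕ) ∧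
        ∀ x : Polynomial (ZMod 2) ⧸
            Ideal.span {(X : Polynomial (ZMod 2)) ^ 3 + X ^ 4},
          p.eval x = x ^ m} ≤ 6 := by
  refine ⟨aux_key, ?_⟩
  apply csInf_le (OrderBot.bddBelow _)
  refine ⟨X ^ 3 + X ^ 4 + X ^ 5, ?_, ?_, ?_⟩
  · intro i
    simp only [coeff_add, coeff_X_pow]
    split_ifs <;> first | omega | (norm_num <;> first | exact zero_mem _ | exact one_mem _)
  · have h5 : (X ^ 3 + X ^ 4 + X ^ 5 : Polynomial (Polynomial (ZMod 2) ⧸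
          Ideal.span {(X : Polynomial (ZMod 2)) ^ 3 + X ^ 4})).degree ≤ 5 := by
      compute_degree
    exact lt_of_le_of_lt h5 (by decide)
  · intro x
    have h1 := aux_key x
    have h2 : (2 : Polynomial (ZMod 2) ⧸
          Ideal.span {(X : Polynomial (ZMod 2)) ^ 3 + X ^ 4}) = 0 := by
      have : ((2 : Polynomial (ZMod 2))) = 0 := by
        exact_mod_cast CharP.cast_eq_zero (Polynomial (ZMod 2)) 2
      calc (2 : Polynomial (ZMod 2) ⧸ Ideal.span {(X : Polynomial (ZMod 2)) ^ 3 + X ^ 4})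
          = Ideal.Quotient.mk _ (2 : Polynomial (ZMod 2)) := by rfl
        _ = 0 := by rw [this, map_zero]
    simp only [eval_add, eval_pow, eval_X]
    linear_combination h1 - x ^ 6 * h2
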